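/- For every r₂ ∈ ℂ with |r₂| = 1 and r₂ ≠ 1, the kernel quadratic Q_{r₂} has two roots δ₀(r₂) and δ₁(r₂) satisfying |δ₀(r₂)| < 1 < |δ₁(r₂)|. For r₂ = 1, the set of roots of Q₁ is {1, λ̄aā/(λ(ā²+a²)+λāa)}. -/

import Mathlib

/-- The kernel quadratic in r₁ (for a fixed nonzero r₂):
Q_{r₂}(r₁) = (λ(ā²+a²)+λāa/r₂)r₁² − (λ(ā²+a²)+aā+λ̄āa(1−1/r₂))r₁ + λ̄aā. -/
noncomputable def Qker (a lam : ℝ) (r2 r1 : ℂ) : ℂ :=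
  ((lam:ℂ)*((1-(a:ℂ))^2+(a:ℂ)^2) + (lam:ℂ)*(1-(a:ℂ))*(a:ℂ)/r2) * r1^2
  - ((lam:ℂ)*((1-(a:ℂ))^2+(a:ℂ)^2) + (a:ℂ)*(1-(a:ℂ))
      + (1-(lam:ℂ))*(1-(a:ℂ))*(a:ℂ)*(1 - 1/r2)) * r1
  + (1-(lam:ℂ))*(a:ℂ)*(1-(a:ℂ))

private lemma re_lt_one_of (r2 : ℂ) (h : ‖r2‖ = 1) (hne : r2 ≠ 1) : r2.re < 1 := by
  have hle : r2.re ≤ 1 := h ▸ Complex.re_le_norm r2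
  refine lt_of_le_of_ne hle ?_
  intro he
  have hns : Complex.normSq r2 = 1 := by
    rw [← Complex.sq_norm, h]; norm_num
  rw [Complex.normSq_apply, he] at hns
  have him : r2.im = 0 := by
    have : r2.im * r2.im = 0 := by linarith
    exact mul_self_eq_zero.mp this
  exact hne (Complex.ext (by simp [he]) (by simp [him]))

private lemma sum_abs_le {d0 d1 : ℂ} (h : 0 ≤ (‖d0‖ - 1)*(‖d1‖ - 1)) :
    ‖d0+d1‖ ≤ 1 + ‖d0*d1‖ := by
  have h1 := norm_add_le d0 d1
  rw [norm_mul]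
  nlinarith [norm_nonneg d0, norm_nonneg d1]

private lemma quad_fac {A B C s : ℂ} (hA : A ≠ 0) (hs : s^2 = B^2 - 4*A*C) (z : ℂ) :
    A*z^2 - B*z + C = A*(z - (B-s)/(2*A))*(z - (B+s)/(2*A)) := by
  field_simp
  linear_combination hs

private lemma quad_sum {A B s : ℂ} (hA : A ≠ 0) :
    A*(((B-s)/(2*A)) + ((B+s)/(2*A))) = B := by
  field_simp; ring

private lemma quad_prod {A B C s : ℂ} (hA : A ≠ 0) (hs : s^2 = B^2 - 4*A*C) :
    A*(((B-s)/(2*A)) * ((B+s)/(2*A))) = C := by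
  field_simp
  linear_combination -hs

private lemma re_comp (r2 : ℂ) (K X : ℝ) (h : ‖r2‖ = 1) :
    (((X:ℝ):ℂ) + ((K:ℝ):ℂ)*(1 - 1/r2)).re = X + K*(1 - r2.re) := by
  have hns : Complex.normSq r2 = 1 := by rw [← Complex.sq_norm, h]; norm_num
  have hinv : (1/r2).re = r2.re := by rw [one_div, Complex.inv_def, hns]; simp
  rw [Complex.add_re, Complex.ofReal_re, Complex.re_ofReal_mul, Complex.sub_re,
    Complex.one_re, hinv]

theorem stmt14 (a lam : ℝ) (ha : 0 < a) (ha1 : a < 1) (hl : 0 < lam) (hl1 : lam < 1) :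
    (∀ r2 : ℂ, ‖r2‖ = 1 → r2 ≠ 1 →
      ∃ d0 d1 : ℂ, ‖d0‖ < 1 ∧ 1 < ‖d1‖ ∧
        ∀ z : ℂ, Qker a lam r2 z = 0 ↔ (z = d0 ∨ z = d1)) ∧
    ({z : ℂ | Qker a lam 1 z = 0} =
      {1, ((1-(lam:ℂ))*(a:ℂ)*(1-(a:ℂ))) /
        ((lam:ℂ)*((1-(a:ℂ))^2+(a:ℂ)^2) + (lam:ℂ)*(1-(a:ℂ))*(a:ℂ))}) := by
  have hq0 : (0:ℝ) < (1-a)^2 + a^2 := by nlinarith [sq_nonneg (1-a)]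
  have hM1 : (0:ℝ) < lam*((1-a)^2+a^2) := mul_pos hl hq0
  have hM2 : (0:ℝ) < lam*(1-a)*a := mul_pos (mul_pos hl (by linarith)) ha
  have hMC : (0:ℝ) < (1-lam)*a*(1-a) := mul_pos (mul_pos (by linarith) ha) (by linarith)
  have hK0 : (0:ℝ) < (1-lam)*(1-a)*a := mul_pos (mul_pos (by linarith) (by linarith)) ha
  constructor
  · intro r2 hr2 hr2ne
    obtain ⟨A, hAdef⟩ : ∃ A : ℂ,
        A = (lam:ℂ)*((1-(a:ℂ))^2+(a:ℂ)^2) + (lam:ℂ)*(1-(a:ℂ))*(a:ℂ)/r2 := ⟨_, rfl⟩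
    obtain ⟨B, hBdef⟩ : ∃ B : ℂ,
        B = (lam:ℂ)*((1-(a:ℂ))^2+(a:ℂ)^2) + (a:ℂ)*(1-(a:ℂ))
          + (1-(lam:ℂ))*(1-(a:ℂ))*(a:ℂ)*(1 - 1/r2) := ⟨_, rfl⟩
    obtain ⟨C, hCdef⟩ : ∃ C : ℂ, C = (1-(lam:ℂ))*(a:ℂ)*(1-(a:ℂ)) := ⟨_, rfl⟩
    have hQ : ∀ z : ℂ, Qker a lam r2 z = A*z^2 - B*z + C := fun z => by
      rw [hAdef, hBdef, hCdef]; rfl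
    have habs1 : ‖(lam:ℂ)*((1-(a:ℂ))^2+(a:ℂ)^2)‖ = lam*((1-a)^2+a^2) := by
      rw [show (lam:ℂ)*((1-(a:ℂ))^2+(a:ℂ)^2) = ((lam*((1-a)^2+a^2) : ℝ) : ℂ) by push_cast; ring,
        Complex.norm_real, Real.norm_eq_abs, abs_of_pos hM1]
    have habs2 : ‖(lam:ℂ)*(1-(a:ℂ))*(a:ℂ)/r2‖ = lam*(1-a)*a := by
      rw [norm_div, hr2, div_one,
        show (lam:ℂ)*(1-(a:ℂ))*(a:ℂ) = ((lam*(1-a)*a : ℝ):ℂ) by push_cast; ring,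
        Complex.norm_real, Real.norm_eq_abs, abs_of_pos hM2]
    have habsA : ‖A‖ ≤ lam*((1-a)^2+a^2) + lam*(1-a)*a := by
      rw [hAdef]
      calc ‖(lam:ℂ)*((1-(a:ℂ))^2+(a:ℂ)^2) + (lam:ℂ)*(1-(a:ℂ))*(a:ℂ)/r2‖
          ≤ ‖(lam:ℂ)*((1-(a:ℂ))^2+(a:ℂ)^2)‖
            + ‖(lam:ℂ)*(1-(a:ℂ))*(a:ℂ)/r2‖ := norm_add_le _ _
        _ = _ := by rw [habs1, habs2]
    have habsC : ‖C‖ = (1-lam)*a*(1-a) := by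
      rw [show C = (((1-lam)*a*(1-a):ℝ):ℂ) by rw [hCdef]; push_cast; ring,
        Complex.norm_real, Real.norm_eq_abs, abs_of_pos hMC]
    have hAlb : lam*((1-a)^2+a^2) - lam*(1-a)*a ≤ ‖A‖ := by
      have hcalc : lam*((1-a)^2+a^2) ≤ ‖A‖ + lam*(1-a)*a := by
        calc lam*((1-a)^2+a^2) = ‖(lam:ℂ)*((1-(a:ℂ))^2+(a:ℂ)^2)‖ := habs1.symm
          _ = ‖A + (-((lam:ℂ)*(1-(a:ℂ))*(a:ℂ)/r2))‖ := by rw [hAdef]; ring_nf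
          _ ≤ ‖A‖ + ‖-((lam:ℂ)*(1-(a:ℂ))*(a:ℂ)/r2)‖ :=
              norm_add_le _ _
          _ = ‖A‖ + lam*(1-a)*a := by rw [norm_neg, habs2]
      linarith
    have hApos : 0 < ‖A‖ := by nlinarith [sq_nonneg (2*a-1)]
    have hAne : A ≠ 0 := by
      intro h; rw [h] at hApos; simp at hApos
    have hre1 : r2.re < 1 := re_lt_one_of r2 hr2 hr2ne
    have hBre : B.re = (lam*((1-a)^2+a^2) + a*(1-a)) + ((1-lam)*(1-a)*a)*(1 - r2.re) := by
      have hBalt : B = ((lam*((1-a)^2+a^2) + a*(1-a) : ℝ):ℂ)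
          + (((1-lam)*(1-a)*a : ℝ):ℂ)*(1 - 1/r2) := by rw [hBdef]; push_cast; ring
      rw [hBalt, re_comp r2 _ _ hr2]
    have hBgt : ‖A‖ + ‖C‖ < ‖B‖ := by
      have h1 : B.re ≤ ‖B‖ := Complex.re_le_norm B
      have hKt : 0 < ((1-lam)*(1-a)*a)*(1 - r2.re) := mul_pos hK0 (by linarith)
      have hid : lam*(1-a)*a + (1-lam)*a*(1-a) = a*(1-a) := by ring
      linarith
    obtain ⟨s, hs⟩ := IsAlgClosed.exists_pow_nat_eq (B^2 - 4*A*C) (n := 2) (by norm_num)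
    refine ?_
    have hfac : ∀ z : ℂ, Qker a lam r2 z
        = A*(z - (B-s)/(2*A))*(z - (B+s)/(2*A)) := fun z => by
      rw [hQ z]; exact quad_fac hAne hs z
    have hsum := quad_sum (B := B) (s := s) hAne
    have hprod := quad_prod hAne hs
    have hcross : (‖(B-s)/(2*A)‖ - 1) * (‖(B+s)/(2*A)‖ - 1) < 0 := by
      by_contra hcon
      push_neg at hcon
      have hkey := sum_abs_le hcon
      have e1 : ‖A‖ * ‖(B-s)/(2*A) + (B+s)/(2*A)‖ = ‖B‖ := by
        rw [← norm_mul, hsum]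
      have e2 : ‖A‖ * ‖(B-s)/(2*A) * ((B+s)/(2*A))‖ = ‖C‖ := by
        rw [← norm_mul, hprod]
      have hmul := mul_le_mul_of_nonneg_left hkey (norm_nonneg A)
      rw [mul_add, mul_one] at hmul
      linarith
    rcases mul_neg_iff.mp hcross with ⟨h1, h2⟩ | ⟨h1, h2⟩
    · refine ⟨(B+s)/(2*A), (B-s)/(2*A), by linarith, by linarith, fun z => ?_⟩
      rw [hfac z]
      simp only [mul_eq_zero, sub_eq_zero, hAne, false_or]
      exact or_comm
    · refine ⟨(B-s)/(2*A), (B+s)/(2*A), by linarith, by linarith, fun z => ?_⟩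
      rw [hfac z]
      simp only [mul_eq_zero, sub_eq_zero, hAne, false_or]
  · have hA1ne : ((lam:ℂ)*((1-(a:ℂ))^2+(a:ℂ)^2) + (lam:ℂ)*(1-(a:ℂ))*(a:ℂ)) ≠ 0 := by
      rw [show (lam:ℂ)*((1-(a:ℂ))^2+(a:ℂ)^2) + (lam:ℂ)*(1-(a:ℂ))*(a:ℂ)
          = ((lam*((1-a)^2+a^2) + lam*(1-a)*a : ℝ):ℂ) by push_cast; ring]
      exact Complex.ofReal_ne_zero.mpr (by positivity)
    ext z
    simp only [Set.mem_setOf_eq, Set.mem_insert_iff, Set.mem_singleton_iff]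
    have hfac : Qker a lam 1 z
        = ((lam:ℂ)*((1-(a:ℂ))^2+(a:ℂ)^2) + (lam:ℂ)*(1-(a:ℂ))*(a:ℂ)) * (z - 1) *
          (z - ((1-(lam:ℂ))*(a:ℂ)*(1-(a:ℂ))) /
            ((lam:ℂ)*((1-(a:ℂ))^2+(a:ℂ)^2) + (lam:ℂ)*(1-(a:ℂ))*(a:ℂ))) := by
      have key : ((lam:ℂ)*((1-(a:ℂ))^2+(a:ℂ)^2) + (lam:ℂ)*(1-(a:ℂ))*(a:ℂ)) *
          (((1-(lam:ℂ))*(a:ℂ)*(1-(a:ℂ))) /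
            ((lam:ℂ)*((1-(a:ℂ))^2+(a:ℂ)^2) + (lam:ℂ)*(1-(a:ℂ))*(a:ℂ)))
          = (1-(lam:ℂ))*(a:ℂ)*(1-(a:ℂ)) := mul_div_cancel₀ _ hA1ne
      unfold Qker
      linear_combination (z-1) * key
    rw [hfac]
    simp only [mul_eq_zero, sub_eq_zero, hA1ne, false_or]
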